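/- arXiv:1102.5315 — 4 statements merged into one kernel-verified Lean document; each statement's English description precedes it below -/
import Mathlib

section
/- Assume W : ℝ → ℝ is continuous and there exist M > 0 and α ∈ [0,2) with W(s) ≤ M|s|^α for all s ≥ 0. Then there exists a pair (u,v) ∈ X with C(u,v) = −∫ v u_x dx ≠ 0 and E(u,v) < |C(u,v)|; that is, Λ* := inf{ E(𝐮)/|C(𝐮)| : 𝐮 ∈ X, C(𝐮) ≠ 0 } < 1. -/
open MeasureTheory Filter Topology

noncomputable section

/-- `u ∈ H²(ℝ)`: `u` has everywhere first derivative `u'` and second derivative `u''`,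
with `u, u', u'' ∈ L²(ℝ)`. -/
def InH2 (u u' u'' : ℝ → ℝ) : Prop :=
  (∀ x, HasDerivAt u (u' x) x) ∧ (∀ x, HasDerivAt u' (u'' x) x) ∧
    MemLp u 2 ∧ MemLp u' 2 ∧ MemLp u'' 2

/-- `(u,v) ∈ X = H²(ℝ) × L²(ℝ)`. -/
def InX (u u' u'' v : ℝ → ℝ) : Prop :=
  InH2 u u' u'' ∧ MemLp v 2

/-- The squared `X`-norm `‖𝐮‖² = ∫ (v² + u_xx² + u²)`. -/
def normSq (u u'' v : ℝ → ℝ) : ℝ :=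
  ∫ x : ℝ, ((v x) ^ 2 + (u'' x) ^ 2 + (u x) ^ 2)

/-- The energy `E(𝐮) = ½∫(v² + u_xx²) + ∫ W(u)`. -/
def energy (W u u'' v : ℝ → ℝ) : ℝ :=
  (1 / 2) * (∫ x : ℝ, ((v x) ^ 2 + (u'' x) ^ 2)) + ∫ x : ℝ, W (u x)

/-- The momentum (hylenic charge) `C(𝐮) = −∫ v u_x`. -/
def momentum (u' v : ℝ → ℝ) : ℝ :=
  -∫ x : ℝ, v x * u' x

namespace Hylo

open ContDiff

def phi : ℝ → ℝ := fun x => expNegInvGlue (1 - x ^ 2)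

lemma phi_contDiff : ContDiff ℝ ∞ phi := by
  unfold phi
  exact expNegInvGlue.contDiff.comp (contDiff_const.sub (contDiff_id.pow 2))

lemma phi_nonneg (x : ℝ) : 0 ≤ phi x := expNegInvGlue.nonneg _

lemma phi_le_one (x : ℝ) : phi x ≤ 1 := by
  unfold phi expNegInvGlue
  split_ifs with h
  · exact zero_le_one
  · exact Real.exp_le_one_iff.2 (by
      rw [neg_nonpos]
      exact inv_nonneg.2 (le_of_lt (not_le.1 h)))

lemma abs_of_not_mem {x : ℝ} (hx : x ∉ Set.Icc (-1:ℝ) 1) : 1 ≤ |x| := by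
  simp only [Set.mem_Icc, not_and_or, not_le] at hx
  rw [le_abs]
  rcases hx with h | h
  · right; linarith
  · left; linarith

lemma phi_zero {x : ℝ} (hx : 1 ≤ |x|) : phi x = 0 := by
  apply expNegInvGlue.zero_of_nonpos
  nlinarith [abs_nonneg x, sq_abs x]

lemma phi_zero' {x : ℝ} (hx : x ∉ Set.Icc (-1:ℝ) 1) : phi x = 0 :=
  phi_zero (abs_of_not_mem hx)

lemma phi_hcs : HasCompactSupport phi :=
  HasCompactSupport.intro (isCompact_Icc (a := (-1:ℝ)) (b := 1)) fun _ hx => phi_zero' hx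

def psi : ℝ → ℝ := deriv phi
def chi : ℝ → ℝ := deriv psi

lemma psi_contDiff : ContDiff ℝ ∞ psi := by
  have := phi_contDiff.iterate_deriv 1
  simpa [psi] using this

lemma chi_contDiff : ContDiff ℝ ∞ chi := by
  have := psi_contDiff.iterate_deriv 1
  simpa [chi] using this

lemma psi_hcs : HasCompactSupport psi := phi_hcs.deriv
lemma chi_hcs : HasCompactSupport chi := psi_hcs.deriv

lemma phi_hasDeriv (x : ℝ) : HasDerivAt phi (psi x) x :=
  (phi_contDiff.differentiable (by simp) x).hasDerivAt

lemma psi_hasDeriv (x : ℝ) : HasDerivAt psi (chi x) x :=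
  (psi_contDiff.differentiable (by simp) x).hasDerivAt

lemma tsupport_phi : tsupport phi ⊆ Set.Icc (-1:ℝ) 1 :=
  closure_minimal (fun x hx => by
    by_contra h
    exact hx (phi_zero' h)) isClosed_Icc

lemma psi_zero' {x : ℝ} (hx : x ∉ Set.Icc (-1:ℝ) 1) : psi x = 0 := by
  by_contra h
  exact hx (tsupport_phi (support_deriv_subset (Function.mem_support.2 h)))

lemma tsupport_psi : tsupport psi ⊆ Set.Icc (-1:ℝ) 1 :=
  closure_minimal (fun x hx => by
    by_contra h
    exact hx (psi_zero' h)) isClosed_Icc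

lemma chi_zero' {x : ℝ} (hx : x ∉ Set.Icc (-1:ℝ) 1) : chi x = 0 := by
  by_contra h
  exact hx (tsupport_psi (support_deriv_subset (Function.mem_support.2 h)))

lemma sq_hcs {f : ℝ → ℝ} (hf : HasCompactSupport f) :
    HasCompactSupport (fun x => (f x) ^ 2) := by
  exact hf.comp_left (g := fun y : ℝ => y ^ 2) (by norm_num)

lemma psi_sq_integrable : Integrable fun x : ℝ => (psi x) ^ 2 :=
  ((psi_contDiff.continuous).pow 2).integrable_of_hasCompactSupport (sq_hcs psi_hcs)

lemma A_pos : 0 < ∫ x : ℝ, (psi x) ^ 2 := by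
  obtain ⟨c, hc, hder⟩ := exists_hasDerivAt_eq_slope phi psi (by norm_num : (0:ℝ) < 1)
    (phi_contDiff.continuous.continuousOn) (fun x _ => phi_hasDeriv x)
  have hphi1 : phi 1 = 0 := phi_zero (by norm_num)
  have hphi0 : 0 < phi 0 := by
    unfold phi
    exact expNegInvGlue.pos_of_pos (by norm_num)
  have hcne : psi c ≠ 0 := by
    rw [hder, hphi1]
    intro h
    have : phi 0 = 0 := by field_simp at h; linarith
    linarith
  rw [integral_pos_iff_support_of_nonneg (fun x => sq_nonneg (psi x)) psi_sq_integrable]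
  have hopen : IsOpen {x : ℝ | psi x ≠ 0} :=
    isOpen_ne_fun psi_contDiff.continuous continuous_const
  have hsub : {x : ℝ | psi x ≠ 0} ⊆ Function.support fun x => (psi x) ^ 2 := by
    intro x hx
    simp only [Function.mem_support, pow_eq_zero_iff, ne_eq]
    simpa using hx
  calc (0:ENNReal) < volume {x : ℝ | psi x ≠ 0} := hopen.measure_pos volume ⟨c, hcne⟩
    _ ≤ _ := measure_mono hsub

end Hylo

open Hylo


/-- Hylomorphy (Lemma 7): if `W` is continuous and `W(s) ≤ M|s|^α` for all `s ≥ 0`,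
for some `M > 0` and `α ∈ [0,2)`, then there is `𝐮 = (u,v) ∈ X` with
`C(𝐮) ≠ 0` and `E(𝐮) < |C(𝐮)|`; i.e. `Λ* < 1`. -/
theorem hylomorphy_lambda_star_lt_one (W : ℝ → ℝ) (hW : Continuous W)
    (hWiii : ∃ M : ℝ, 0 < M ∧ ∃ α : ℝ, α ∈ Set.Ico (0 : ℝ) 2 ∧
      ∀ s : ℝ, 0 ≤ s → W s ≤ M * |s| ^ α) :
    ∃ u u' u'' v : ℝ → ℝ, InX u u' u'' v ∧
      momentum u' v ≠ 0 ∧ energy W u u'' v < |momentum u' v| := by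
  obtain ⟨M, hM, α, ⟨hα0, hα2⟩, hWle⟩ := hWiii
  obtain ⟨A, hA_def⟩ : ∃ A : ℝ, A = ∫ x : ℝ, (psi x) ^ 2 := ⟨_, rfl⟩
  obtain ⟨B, hB_def⟩ : ∃ B : ℝ, B = ∫ x : ℝ, (chi x) ^ 2 := ⟨_, rfl⟩
  have hApos : 0 < A := hA_def ▸ A_pos
  have hBnn : 0 ≤ B := hB_def ▸ integral_nonneg fun x => sq_nonneg _
  obtain ⟨l, hl_def⟩ : ∃ l : ℝ, l = Real.sqrt (2 * B / A) + 1 := ⟨_, rfl⟩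
  have hl1 : 1 ≤ l := hl_def ▸ le_add_of_nonneg_left (Real.sqrt_nonneg _)
  have hl : 0 < l := lt_of_lt_of_le one_pos hl1
  have hlB : 2 * B ≤ A * l ^ 2 := by
    have hs := Real.sq_sqrt (by positivity : (0:ℝ) ≤ 2 * B / A)
    have h1 : 2 * B / A ≤ l ^ 2 := by
      rw [hl_def]
      nlinarith [Real.sqrt_nonneg (2 * B / A)]
    have h2 := mul_le_mul_of_nonneg_left h1 hApos.le
    have h3 : A * (2 * B / A) = 2 * B := by field_simp
    linarith
  obtain ⟨R, hRgt, hR0⟩ := (((tendsto_rpow_atTop (by linarith : (0:ℝ) < 2 - α)).eventually_gt_atTop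
      (8 * l ^ 2 * M / A)).and (eventually_gt_atTop 0)).exists
  -- the functions
  obtain ⟨u, hu_def⟩ : ∃ u : ℝ → ℝ, u = fun x => R * phi (x / l) := ⟨_, rfl⟩
  obtain ⟨u', hu'_def⟩ : ∃ u' : ℝ → ℝ, u' = fun x => R / l * psi (x / l) := ⟨_, rfl⟩
  obtain ⟨u'', hu''_def⟩ : ∃ u'' : ℝ → ℝ, u'' = fun x => R / l ^ 2 * chi (x / l) := ⟨_, rfl⟩
  obtain ⟨v, hv_def⟩ : ∃ v : ℝ → ℝ, v = fun x => -(R / l * psi (x / l)) := ⟨_, rfl⟩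
  -- derivatives
  have hdivd : ∀ x : ℝ, HasDerivAt (fun y : ℝ => y / l) (1 / l) x := fun x =>
    (hasDerivAt_id x).div_const l
  have hud : ∀ x, HasDerivAt u (u' x) x := by
    intro x
    have h2 : HasDerivAt (fun y : ℝ => phi (y / l)) (psi (x / l) * (1 / l)) x :=
      HasDerivAt.comp (h₂ := phi) (h := fun y : ℝ => y / l) x (phi_hasDeriv (x / l)) (hdivd x)
    have h3 := h2.const_mul R
    rw [hu_def, hu'_def]
    exact h3.congr_deriv (by beta_reduce; ring)
  have hu'd : ∀ x, HasDerivAt u' (u'' x) x := by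
    intro x
    have h2 : HasDerivAt (fun y : ℝ => psi (y / l)) (chi (x / l) * (1 / l)) x :=
      HasDerivAt.comp (h₂ := psi) (h := fun y : ℝ => y / l) x (psi_hasDeriv (x / l)) (hdivd x)
    have h3 := h2.const_mul (R / l)
    rw [hu'_def, hu''_def]
    exact h3.congr_deriv (by beta_reduce; ring)
  -- outside Icc (-l) l, the argument x / l is outside Icc (-1) 1
  have hout : ∀ x : ℝ, x ∉ Set.Icc (-l) l → x / l ∉ Set.Icc (-1:ℝ) 1 := by
    intro x hx hx'
    apply hx
    rw [Set.mem_Icc] at hx' ⊢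
    constructor
    · have := mul_le_mul_of_nonneg_right hx'.1 hl.le
      rwa [div_mul_cancel₀ _ hl.ne', neg_one_mul] at this
    · have := mul_le_mul_of_nonneg_right hx'.2 hl.le
      rwa [div_mul_cancel₀ _ hl.ne', one_mul] at this
  -- vanishing outside
  have hu0 : ∀ x : ℝ, x ∉ Set.Icc (-l) l → u x = 0 := fun x hx => by
    simp [hu_def, phi_zero' (hout x hx)]
  have hu'0 : ∀ x : ℝ, x ∉ Set.Icc (-l) l → u' x = 0 := fun x hx => by
    simp [hu'_def, psi_zero' (hout x hx)]
  have hu''0 : ∀ x : ℝ, x ∉ Set.Icc (-l) l → u'' x = 0 := fun x hx => by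
    simp [hu''_def, chi_zero' (hout x hx)]
  have hv0 : ∀ x : ℝ, x ∉ Set.Icc (-l) l → v x = 0 := fun x hx => by
    simp [hv_def, psi_zero' (hout x hx)]
  -- compact supports
  have hucs : HasCompactSupport u := HasCompactSupport.intro isCompact_Icc hu0
  have hu'cs : HasCompactSupport u' := HasCompactSupport.intro isCompact_Icc hu'0
  have hu''cs : HasCompactSupport u'' := HasCompactSupport.intro isCompact_Icc hu''0
  have hvcs : HasCompactSupport v := HasCompactSupport.intro isCompact_Icc hv0
  -- continuity
  have hdivc : Continuous fun y : ℝ => y / l := continuous_id.div_const l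
  have hucont : Continuous u := by
    rw [hu_def]; exact continuous_const.mul (phi_contDiff.continuous.comp hdivc)
  have hu'cont : Continuous u' := by
    rw [hu'_def]; exact continuous_const.mul (psi_contDiff.continuous.comp hdivc)
  have hu''cont : Continuous u'' := by
    rw [hu''_def]; exact continuous_const.mul (chi_contDiff.continuous.comp hdivc)
  have hvcont : Continuous v := by
    rw [hv_def]
    exact (continuous_const.mul (psi_contDiff.continuous.comp hdivc)).neg
  -- MemLp
  have humem : MemLp u 2 := hucont.memLp_of_hasCompactSupport hucs
  have hu'mem : MemLp u' 2 := hu'cont.memLp_of_hasCompactSupport hu'cs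
  have hu''mem : MemLp u'' 2 := hu''cont.memLp_of_hasCompactSupport hu''cs
  have hvmem : MemLp v 2 := hvcont.memLp_of_hasCompactSupport hvcs
  -- scaling integral
  have key : ∀ (c : ℝ) (f : ℝ → ℝ), (∫ x : ℝ, (c * f (x / l)) ^ 2)
      = c ^ 2 * l * ∫ y : ℝ, (f y) ^ 2 := by
    intro c f
    simp_rw [mul_pow]
    rw [integral_const_mul, Measure.integral_comp_div (fun y => (f y) ^ 2) l,
      abs_of_pos hl, smul_eq_mul]
    ring
  have hIu' : (∫ x : ℝ, (u' x) ^ 2) = R ^ 2 * A / l := by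
    simp only [hu'_def]
    rw [key (R / l) psi, ← hA_def]
    field_simp
  have hIu'' : (∫ x : ℝ, (u'' x) ^ 2) = R ^ 2 * B / l ^ 3 := by
    simp only [hu''_def]
    rw [key (R / l ^ 2) chi, ← hB_def]
    field_simp
  -- momentum
  have hmom : momentum u' v = R ^ 2 * A / l := by
    unfold momentum
    have hfun : (fun x : ℝ => v x * u' x) = fun x : ℝ => -((u' x) ^ 2) := by
      funext x
      simp only [hv_def, hu'_def]
      ring
    rw [hfun, integral_neg, neg_neg, hIu']
  have hmompos : 0 < momentum u' v := by
    rw [hmom]; positivity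
  -- integrability of squares
  have hu'sqint : Integrable fun x : ℝ => (u' x) ^ 2 :=
    (hu'cont.pow 2).integrable_of_hasCompactSupport (sq_hcs hu'cs)
  have hu''sqint : Integrable fun x : ℝ => (u'' x) ^ 2 :=
    (hu''cont.pow 2).integrable_of_hasCompactSupport (sq_hcs hu''cs)
  have hsplit : (∫ x : ℝ, ((v x) ^ 2 + (u'' x) ^ 2))
      = R ^ 2 * A / l + R ^ 2 * B / l ^ 3 := by
    have hvu : (fun x : ℝ => (v x) ^ 2 + (u'' x) ^ 2)
        = fun x : ℝ => (u' x) ^ 2 + (u'' x) ^ 2 := by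
      funext x
      simp only [hv_def, hu'_def]
      ring
    rw [hvu, integral_add hu'sqint hu''sqint, hIu', hIu'']
  -- the W-term
  obtain ⟨IW, hIW_def⟩ : ∃ IW : ℝ, IW = ∫ x : ℝ, W (u x) := ⟨_, rfl⟩
  -- key exponent inequality
  have hrpos : (0:ℝ) < R ^ α := Real.rpow_pos_of_pos hR0 α
  have hRα : 8 * l ^ 2 * M * R ^ α < R ^ 2 * A := by
    have hdiv : 8 * l ^ 2 * M < R ^ (2 - α) * A := (div_lt_iff₀ hApos).1 hRgt
    have hmul : R ^ (2 - α) * R ^ α = R ^ 2 := by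
      rw [← Real.rpow_add hR0]
      rw [sub_add_cancel]
      rw [show ((2:ℝ)) = ((2:ℕ):ℝ) by norm_num, Real.rpow_natCast]
    nlinarith [mul_lt_mul_of_pos_right hdiv hrpos]
  -- bound on IW
  have hIWbound : IW = 0 ∨ IW ≤ 2 * l * (M * R ^ α) := by
    by_cases hI : Integrable fun x : ℝ => W (u x)
    · right
      -- first, W 0 = 0
      have hWu_cont : Continuous fun x : ℝ => W (u x) := hW.comp hucont
      have hsub_hcs : HasCompactSupport fun x : ℝ => W (u x) - W 0 :=
        HasCompactSupport.intro isCompact_Icc (fun x hx => by rw [hu0 x hx]; ring)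
      have hsub_int : Integrable fun x : ℝ => W (u x) - W 0 :=
        (hWu_cont.sub continuous_const).integrable_of_hasCompactSupport hsub_hcs
      have hconst : Integrable fun _ : ℝ => W 0 := by
        have h := hI.sub hsub_int
        have hfe : (fun _ : ℝ => W 0)
            = (fun x : ℝ => W (u x)) - fun x : ℝ => W (u x) - W 0 := by
          funext x
          simp
        rw [hfe]
        exact h
      have hW0 : W 0 = 0 := by
        rcases integrable_const_iff.1 hconst with h | h
        · exact h
        · have h := @measure_lt_top _ _ volume h Set.univ; rw [Real.volume_univ] at h
          exact absurd h (by simp)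
      -- pointwise bound by an indicator
      obtain ⟨g, hg_def⟩ : ∃ g : ℝ → ℝ,
          g = Set.indicator (Set.Icc (-l) l) (fun _ => M * R ^ α) := ⟨_, rfl⟩
      have hgint : Integrable g := by
        rw [hg_def, integrable_indicator_iff measurableSet_Icc]
        exact integrableOn_const measure_Icc_lt_top.ne
      have hpt : ∀ x : ℝ, W (u x) ≤ g x := by
        intro x
        by_cases hx : x ∈ Set.Icc (-l) l
        · rw [hg_def, Set.indicator_of_mem hx]
          have hun : 0 ≤ u x := by
            rw [hu_def]
            exact mul_nonneg hR0.le (phi_nonneg _)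
          have huR : u x ≤ R := by
            rw [hu_def]
            nlinarith [phi_le_one (x / l), phi_nonneg (x / l)]
          calc W (u x) ≤ M * |u x| ^ α := hWle (u x) hun
            _ ≤ M * R ^ α := by
                apply mul_le_mul_of_nonneg_left _ hM.le
                rw [abs_of_nonneg hun]
                exact Real.rpow_le_rpow hun huR hα0
        · rw [hg_def, Set.indicator_of_notMem hx, hu0 x hx, hW0]
      have hIg : (∫ x : ℝ, g x) = 2 * l * (M * R ^ α) := by
        rw [hg_def, MeasureTheory.integral_indicator measurableSet_Icc, setIntegral_const,
          Real.volume_real_Icc_of_le (by linarith), smul_eq_mul]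
        ring
      rw [hIW_def, ← hIg]
      exact integral_mono hI hgint hpt
    · left
      rw [hIW_def, integral_undef hI]
  -- final inequality
  refine ⟨u, u', u'', v, ⟨⟨hud, hu'd, humem, hu'mem, hu''mem⟩, hvmem⟩, ne_of_gt hmompos, ?_⟩
  rw [abs_of_pos hmompos, hmom]
  unfold energy
  rw [hsplit, ← hIW_def]
  rw [← sub_pos]
  have hrew : R ^ 2 * A / l - (1 / 2 * (R ^ 2 * A / l + R ^ 2 * B / l ^ 3) + IW)
      = (R ^ 2 * A * l ^ 2 - R ^ 2 * B - 2 * IW * l ^ 3) / (2 * l ^ 3) := by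
    field_simp
    ring
  rw [hrew]
  apply div_pos _ (by positivity)
  have hBA : R ^ 2 * B ≤ R ^ 2 * (A * l ^ 2 / 2) :=
    mul_le_mul_of_nonneg_left (by linarith) (by positivity)
  rcases hIWbound with h0 | hle
  · rw [h0]
    nlinarith [mul_pos (pow_pos hR0 2) (mul_pos hApos (pow_pos hl 2))]
  · have h3 : 2 * IW * l ^ 3 ≤ 2 * (2 * l * (M * R ^ α)) * l ^ 3 :=
      mul_le_mul_of_nonneg_right (by linarith) (pow_pos hl 3).le
    have h2 : 0 < (R ^ 2 * A - 8 * l ^ 2 * M * R ^ α) * l ^ 2 :=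
      mul_pos (by linarith) (pow_pos hl 2)
    have e1 : (R ^ 2 * A - 8 * l ^ 2 * M * R ^ α) * l ^ 2
        = R ^ 2 * A * l ^ 2 - 2 * (2 * (2 * l * (M * R ^ α)) * l ^ 3) := by ring
    have e2 : R ^ 2 * (A * l ^ 2 / 2) = R ^ 2 * A * l ^ 2 / 2 := by ring
    rw [e1] at h2
    rw [e2] at hBA
    linarith
end
end

section
/- Assume W : ℝ → ℝ is nonnegative and satisfies (W-i): there exists η > 0 with W(s) ≥ η s² for |s| ≤ 1 and W(s) ≥ η for |s| ≥ 1. Then for every M > 0 there exists a constant C > 0 such that every 𝐮 = (u,v) ∈ X with E(𝐮) ≤ M satisfies ‖𝐮‖ ≤ C, i.e., sublevel sets of the energy are bounded in X. -/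
open MeasureTheory Filter Topology

noncomputable section

lemma tendsto_atTop_of_int_deriv (f f' : ℝ → ℝ) (hd : ∀ x, HasDerivAt f (f' x) x)
    (hi : Integrable f') (a : ℝ) :
    Tendsto f atTop (𝓝 (f a + ∫ x in Set.Ioi a, f' x)) := by
  have key : ∀ b, f b = f a + ∫ x in a..b, f' x := by
    intro b
    have h := intervalIntegral.integral_eq_sub_of_hasDerivAt (f := f) (f' := f') (a := a) (b := b)
      (fun x _ => hd x) (hi.intervalIntegrable)
    linarith
  have h2 : Tendsto (fun b => f a + ∫ x in a..b, f' x) atTop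
      (𝓝 (f a + ∫ x in Set.Ioi a, f' x)) :=
    tendsto_const_nhds.add (intervalIntegral_tendsto_integral_Ioi a hi.integrableOn tendsto_id)
  exact h2.congr (fun b => (key b).symm)

lemma tendsto_atBot_of_int_deriv (f f' : ℝ → ℝ) (hd : ∀ x, HasDerivAt f (f' x) x)
    (hi : Integrable f') (a : ℝ) :
    Tendsto f atBot (𝓝 (f a - ∫ x in Set.Iic a, f' x)) := by
  have key : ∀ b, f b = f a - ∫ x in b..a, f' x := by
    intro b
    have h := intervalIntegral.integral_eq_sub_of_hasDerivAt (f := f) (f' := f') (a := b) (b := a)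
      (fun x _ => hd x) (hi.intervalIntegrable)
    linarith
  have h2 : Tendsto (fun b => f a - ∫ x in b..a, f' x) atBot
      (𝓝 (f a - ∫ x in Set.Iic a, f' x)) :=
    tendsto_const_nhds.sub (intervalIntegral_tendsto_integral_Iic a hi.integrableOn tendsto_id)
  exact h2.congr (fun b => (key b).symm)

lemma limit_eq_zero_atTop (f : ℝ → ℝ) (hf : Integrable f) (h0 : ∀ x, 0 ≤ f x) {L : ℝ}
    (hL : Tendsto f atTop (𝓝 L)) : L = 0 := by
  by_contra hne
  have hL0 : 0 ≤ L := ge_of_tendsto' hL h0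
  have hLpos : 0 < L := lt_of_le_of_ne hL0 (Ne.symm hne)
  have hev : ∀ᶠ x in atTop, L / 2 ≤ f x :=
    hL.eventually (eventually_ge_nhds (by linarith))
  obtain ⟨A, hA⟩ := eventually_atTop.1 hev
  have hsub : Set.Ici A ⊆ {x | L / 2 ≤ f x} := fun x hx => hA x hx
  have hfin := hf.measure_ge_lt_top (half_pos hLpos)
  have := (measure_mono hsub).trans_lt hfin
  rw [Real.volume_Ici] at this
  exact (lt_irrefl _ this).elim

lemma limit_eq_zero_atBot (f : ℝ → ℝ) (hf : Integrable f) (h0 : ∀ x, 0 ≤ f x) {L : ℝ}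
    (hL : Tendsto f atBot (𝓝 L)) : L = 0 := by
  by_contra hne
  have hL0 : 0 ≤ L := ge_of_tendsto' hL h0
  have hLpos : 0 < L := lt_of_le_of_ne hL0 (Ne.symm hne)
  have hev : ∀ᶠ x in atBot, L / 2 ≤ f x :=
    hL.eventually (eventually_ge_nhds (by linarith))
  obtain ⟨A, hA⟩ := eventually_atBot.1 hev
  have hsub : Set.Iic A ⊆ {x | L / 2 ≤ f x} := fun x hx => hA x hx
  have hfin := hf.measure_ge_lt_top (half_pos hLpos)
  have := (measure_mono hsub).trans_lt hfin
  rw [Real.volume_Iic] at this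
  exact (lt_irrefl _ this).elim

lemma key_arith (p q r A M : ℝ) (hp : 0 ≤ p) (hq : 0 ≤ q) (hr : 0 ≤ r) (hA : 0 < A)
    (hM : 0 < M) (hrM : r ≤ 2*M)
    (hP : ∀ t, 0 < t → t*p ≤ A*(t + t^2*p + q))
    (hQ : ∀ s, 0 < s → 2*s*q ≤ s^2*p + r) : p ≤ 2*A + 64*A*(A+1)^3*M := by
  set D : ℝ := A + 1 with hD_def
  clear_value D
  have hD : (0:ℝ) < D := by rw [hD_def]; positivity
  have hAD : A ≤ D := by rw [hD_def]; linarith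
  have h1 := hP (1/(4*D)) (by positivity)
  have h2 := hQ (1/(8*D^2)) (by positivity)
  have hp2 : 4*D*p ≤ 4*D*A + A*p + 16*D^2*A*q := by
    have h := mul_le_mul_of_nonneg_left h1 (show (0:ℝ) ≤ 16*D^2 by positivity)
    have e1 : 16*D^2*((1/(4*D))*p) = 4*D*p := by field_simp; ring
    have e2 : 16*D^2*(A*((1/(4*D)) + (1/(4*D))^2*p + q)) = 4*D*A + A*p + 16*D^2*A*q := by
      field_simp; ring
    rw [e1, e2] at h; exact h
  have hq2 : 16*D^2*q ≤ p + 64*D^4*r := by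
    have h := mul_le_mul_of_nonneg_left h2 (show (0:ℝ) ≤ 32*D^4 by positivity)
    have e1 : 32*D^4*(2*(1/(8*D^2))*q) = 8*D^2*q := by field_simp; ring
    have e2 : 32*D^4*((1/(8*D^2))^2*p + r) = p/2 + 32*D^4*r := by field_simp; ring
    rw [e1, e2] at h; nlinarith [h]
  have hq3 : A*(16*D^2*q) ≤ A*(p + 64*D^4*r) := mul_le_mul_of_nonneg_left hq2 hA.le
  have hApDp : A*p ≤ D*p := mul_le_mul_of_nonneg_right hAD hp
  have hr4 : 64*A*D^4*r ≤ 64*A*D^4*(2*M) :=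
    mul_le_mul_of_nonneg_left hrM (by positivity)
  have h3 : 2*D*p ≤ 2*D*(2*A + 64*A*D^3*M) := by nlinarith
  have := (mul_le_mul_iff_right₀ (show (0:ℝ) < 2*D by positivity)).1 h3
  simpa [hD_def] using this

set_option maxHeartbeats 2000000 in
/-- Lemma 4: if `W ≥ 0` satisfies (W-i), then for every `M > 0` there is `C > 0` such
that every finite-energy state `𝐮 = (u,v) ∈ X` with `E(𝐮) ≤ M` satisfies `‖𝐮‖ ≤ C`. -/
theorem energy_sublevels_bounded (W : ℝ → ℝ) (hWpos : ∀ s, 0 ≤ W s)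
    (hWi : ∃ η : ℝ, 0 < η ∧ (∀ s : ℝ, |s| ≤ 1 → η * s ^ 2 ≤ W s) ∧
      (∀ s : ℝ, 1 ≤ |s| → η ≤ W s))
    (M : ℝ) (hM : 0 < M) :
    ∃ C : ℝ, 0 < C ∧ ∀ u u' u'' v : ℝ → ℝ, InX u u' u'' v →
      Integrable (fun x => W (u x)) →
      energy W u u'' v ≤ M → Real.sqrt (normSq u u'' v) ≤ C := by
  obtain ⟨η, hη, hW1, hW2⟩ := hWi
  set A : ℝ := M / η with hA_def
  have hA : 0 < A := div_pos hM hη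
  set B : ℝ := 2*A + 64*A*(A+1)^3*M with hB_def
  have hB : 0 < B := by positivity
  refine ⟨Real.sqrt (2*M + B) + 1, by positivity, ?_⟩
  intro u u' u'' v hX hWint hE
  obtain ⟨⟨hu, hu', hu2, hu'2, hu''2⟩, hv2⟩ := hX
  have cu : Continuous u := by
    refine continuous_iff_continuousAt.2 fun x => (hu x).continuousAt
  have cu' : Continuous u' := continuous_iff_continuousAt.2 fun x => (hu' x).continuousAt
  have iu2 : Integrable (fun x => u x ^ 2) := hu2.integrable_sq
  have iu'2 : Integrable (fun x => u' x ^ 2) := hu'2.integrable_sq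
  have iu''2 : Integrable (fun x => u'' x ^ 2) := hu''2.integrable_sq
  have iv2 : Integrable (fun x => v x ^ 2) := hv2.integrable_sq
  set p : ℝ := ∫ x : ℝ, u x ^ 2 with hp_def
  set q : ℝ := ∫ x : ℝ, u' x ^ 2 with hq_def
  set r : ℝ := ∫ x : ℝ, u'' x ^ 2 with hr_def
  set V : ℝ := ∫ x : ℝ, v x ^ 2 with hV_def
  clear_value p q r V
  have hp0 : 0 ≤ p := by rw [hp_def]; exact integral_nonneg fun x => sq_nonneg _
  have hq0 : 0 ≤ q := by rw [hq_def]; exact integral_nonneg fun x => sq_nonneg _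
  have hr0 : 0 ≤ r := by rw [hr_def]; exact integral_nonneg fun x => sq_nonneg _
  have hV0 : 0 ≤ V := by rw [hV_def]; exact integral_nonneg fun x => sq_nonneg _
  -- product integrability
  have i_uu' : Integrable (fun x => u x * u' x) := by
    refine ((iu2.add iu'2).const_mul (1/2)).mono' (cu.mul cu').aestronglyMeasurable ?_
    filter_upwards with x
    simp only [Pi.add_apply]
    rw [Real.norm_eq_abs, abs_mul]
    nlinarith [sq_nonneg (|u x| - |u' x|), sq_abs (u x), sq_abs (u' x)]
  have i_uu'' : Integrable (fun x => u x * u'' x) := by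
    refine ((iu2.add iu''2).const_mul (1/2)).mono' (cu.aestronglyMeasurable.mul hu''2.1) ?_
    filter_upwards with x
    simp only [Pi.add_apply]
    rw [Real.norm_eq_abs, abs_mul]
    nlinarith [sq_nonneg (|u x| - |u'' x|), sq_abs (u x), sq_abs (u'' x)]
  -- derivative facts
  have hg : ∀ x, HasDerivAt (fun y => u y ^ 2) (2*(u x * u' x)) x := by
    intro x
    have := (hu x).fun_pow 2
    exact this.congr_deriv (by ring)
  have ig' : Integrable (fun x => 2*(u x * u' x)) := i_uu'.const_mul 2
  have hg2 : ∀ x, HasDerivAt (fun y => u' y ^ 2) (2*(u' x * u'' x)) x := by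
    intro x
    have := (hu' x).fun_pow 2
    exact this.congr_deriv (by ring)
  have i_u'u'' : Integrable (fun x => u' x * u'' x) := by
    refine ((iu'2.add iu''2).const_mul (1/2)).mono' (cu'.aestronglyMeasurable.mul hu''2.1) ?_
    filter_upwards with x
    simp only [Pi.add_apply]
    rw [Real.norm_eq_abs, abs_mul]
    nlinarith [sq_nonneg (|u' x| - |u'' x|), sq_abs (u' x), sq_abs (u'' x)]
  have ig2' : Integrable (fun x => 2*(u' x * u'' x)) := i_u'u''.const_mul 2
  -- limits at infinity
  have gtop0 : Tendsto (fun y => u y ^ 2) atTop (𝓝 0) := by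
    have h1 := tendsto_atTop_of_int_deriv _ _ hg ig' 0
    have h2 := limit_eq_zero_atTop _ iu2 (fun x => sq_nonneg _) h1
    rwa [h2] at h1
  have gbot0 : Tendsto (fun y => u y ^ 2) atBot (𝓝 0) := by
    have h1 := tendsto_atBot_of_int_deriv _ _ hg ig' 0
    have h2 := limit_eq_zero_atBot _ iu2 (fun x => sq_nonneg _) h1
    rwa [h2] at h1
  have g2top0 : Tendsto (fun y => u' y ^ 2) atTop (𝓝 0) := by
    have h1 := tendsto_atTop_of_int_deriv _ _ hg2 ig2' 0
    have h2 := limit_eq_zero_atTop _ iu'2 (fun x => sq_nonneg _) h1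
    rwa [h2] at h1
  have g2bot0 : Tendsto (fun y => u' y ^ 2) atBot (𝓝 0) := by
    have h1 := tendsto_atBot_of_int_deriv _ _ hg2 ig2' 0
    have h2 := limit_eq_zero_atBot _ iu'2 (fun x => sq_nonneg _) h1
    rwa [h2] at h1
  -- sup bound
  have hsup : ∀ x, u x ^ 2 ≤ ∫ y : ℝ, |2*(u y * u' y)| := by
    intro x
    have h1 := tendsto_atTop_of_int_deriv _ _ hg ig' x
    have h2 : u x ^ 2 + ∫ y in Set.Ioi x, 2*(u y * u' y) = 0 :=
      tendsto_nhds_unique h1 gtop0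
    have h3 : u x ^ 2 = -∫ y in Set.Ioi x, 2*(u y * u' y) := by linarith
    rw [h3]
    have h4 : -∫ y in Set.Ioi x, 2*(u y * u' y) ≤ |∫ y in Set.Ioi x, 2*(u y * u' y)| :=
      neg_le_abs _
    have h5 : |∫ y in Set.Ioi x, 2*(u y * u' y)| ≤ ∫ y in Set.Ioi x, |2*(u y * u' y)| := by
      have := norm_integral_le_integral_norm (μ := volume.restrict (Set.Ioi x))
        (fun y => 2*(u y * u' y))
      simpa only [Real.norm_eq_abs] using this
    have h6 : ∫ y in Set.Ioi x, |2*(u y * u' y)| ≤ ∫ y : ℝ, |2*(u y * u' y)| :=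
      setIntegral_le_integral ig'.abs (Eventually.of_forall fun y => abs_nonneg _)
    linarith
  -- Sb : ∀ t > 0, ∀ x, t * u x ^ 2 ≤ t^2 * p + q
  have Sb : ∀ t : ℝ, 0 < t → ∀ x, t * u x ^ 2 ≤ t^2 * p + q := by
    intro t ht x
    have h1 : t * u x ^ 2 ≤ t * ∫ y : ℝ, |2*(u y * u' y)| :=
      mul_le_mul_of_nonneg_left (hsup x) ht.le
    have h2 : t * ∫ y : ℝ, |2*(u y * u' y)| = ∫ y : ℝ, t * |2*(u y * u' y)| :=
      (integral_const_mul t _).symm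
    have h3 : ∫ y : ℝ, t * |2*(u y * u' y)| ≤ ∫ y : ℝ, (t^2 * u y ^ 2 + u' y ^ 2) := by
      refine integral_mono (ig'.abs.const_mul t) ((iu2.const_mul _).add iu'2) fun y => ?_
      simp only [abs_mul, abs_two, abs_mul]
      nlinarith [sq_nonneg (t*|u y| - |u' y|), sq_abs (u y), sq_abs (u' y), abs_nonneg (u y),
        abs_nonneg (u' y)]
    have h4 : ∫ y : ℝ, (t^2 * u y ^ 2 + u' y ^ 2) = t^2 * p + q := by
      rw [hp_def, hq_def, integral_add (iu2.const_mul _) iu'2, integral_const_mul]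
    linarith
  -- integration by parts: q = -∫ u u''
  have hh : ∀ x, HasDerivAt (fun y => u y * u' y) (u' x ^ 2 + u x * u'' x) x := by
    intro x
    have := (hu x).fun_mul (hu' x)
    exact this.congr_deriv (by ring)
  have ih' : Integrable (fun x => u' x ^ 2 + u x * u'' x) := iu'2.add i_uu''
  have hh_top0 : Tendsto (fun x => u x * u' x) atTop (𝓝 0) := by
    refine squeeze_zero_norm (a := fun x => (1/2) * (u x ^ 2 + u' x ^ 2)) (fun x => ?_) ?_
    · show ‖u x * u' x‖ ≤ (1/2) * (u x ^ 2 + u' x ^ 2)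
      rw [Real.norm_eq_abs, abs_mul]
      nlinarith [sq_nonneg (|u x| - |u' x|), sq_abs (u x), sq_abs (u' x)]
    · have := (gtop0.add g2top0).const_mul (1/2 : ℝ)
      simpa using this
  have hh_bot0 : Tendsto (fun x => u x * u' x) atBot (𝓝 0) := by
    refine squeeze_zero_norm (a := fun x => (1/2) * (u x ^ 2 + u' x ^ 2)) (fun x => ?_) ?_
    · show ‖u x * u' x‖ ≤ (1/2) * (u x ^ 2 + u' x ^ 2)
      rw [Real.norm_eq_abs, abs_mul]
      nlinarith [sq_nonneg (|u x| - |u' x|), sq_abs (u x), sq_abs (u' x)]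
    · have := (gbot0.add g2bot0).const_mul (1/2 : ℝ)
      simpa using this
  have huniq_top : u 0 * u' 0 + ∫ x in Set.Ioi (0:ℝ), (u' x ^ 2 + u x * u'' x) = 0 :=
    tendsto_nhds_unique (tendsto_atTop_of_int_deriv _ _ hh ih' 0) hh_top0
  have huniq_bot : u 0 * u' 0 - ∫ x in Set.Iic (0:ℝ), (u' x ^ 2 + u x * u'' x) = 0 :=
    tendsto_nhds_unique (tendsto_atBot_of_int_deriv _ _ hh ih' 0) hh_bot0
  have htotal : ∫ x : ℝ, (u' x ^ 2 + u x * u'' x) = 0 := by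
    rw [← intervalIntegral.integral_Iic_add_Ioi (ih'.integrableOn) (ih'.integrableOn)]
    linarith
  have hq_eq : q = -∫ x : ℝ, u x * u'' x := by
    have := integral_add iu'2 i_uu''
    rw [htotal] at this
    rw [hq_def]; linarith
  -- Qb
  have Qb : ∀ s : ℝ, 0 < s → 2*s*q ≤ s^2*p + r := by
    intro s hs
    have h1 : q ≤ ∫ x : ℝ, |u x * u'' x| := by
      rw [hq_eq]
      have h4 : -∫ x : ℝ, u x * u'' x ≤ |∫ x : ℝ, u x * u'' x| := neg_le_abs _
      have h5 : |∫ x : ℝ, u x * u'' x| ≤ ∫ x : ℝ, |u x * u'' x| := by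
        have := norm_integral_le_integral_norm (μ := volume) (fun x => u x * u'' x)
        simpa only [Real.norm_eq_abs] using this
      linarith
    have h2 : (2*s) * ∫ x : ℝ, |u x * u'' x| ≤ ∫ x : ℝ, (s^2 * u x ^ 2 + u'' x ^ 2) := by
      rw [← integral_const_mul]
      refine integral_mono ((i_uu''.abs).const_mul _) ((iu2.const_mul _).add iu''2) fun y => ?_
      rw [abs_mul]
      nlinarith [sq_nonneg (s*|u y| - |u'' y|), sq_abs (u y), sq_abs (u'' y), abs_nonneg (u y),
        abs_nonneg (u'' y)]
    have h3 : ∫ x : ℝ, (s^2 * u x ^ 2 + u'' x ^ 2) = s^2 * p + r := by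
      rw [hp_def, hr_def, integral_add (iu2.const_mul _) iu''2, integral_const_mul]
    nlinarith [mul_le_mul_of_nonneg_left h1 (show (0:ℝ) ≤ 2*s by positivity)]
  -- energy bounds
  have hW_nonneg : 0 ≤ ∫ x : ℝ, W (u x) := integral_nonneg fun x => hWpos _
  have hVr_int : ∫ x : ℝ, (v x ^ 2 + u'' x ^ 2) = V + r := by
    rw [hV_def, hr_def]; exact integral_add iv2 iu''2
  have hVr0 : 0 ≤ ∫ x : ℝ, (v x ^ 2 + u'' x ^ 2) := integral_nonneg fun x => by positivity
  have hE' : (1/2) * (∫ x : ℝ, (v x ^ 2 + u'' x ^ 2)) + (∫ x : ℝ, W (u x)) ≤ M := by simpa only [energy] using hE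
  have hVrM : V + r ≤ 2*M := by
    rw [← hVr_int]; linarith
  have hWM : ∫ x : ℝ, W (u x) ≤ M := by linarith
  -- min function
  have im : Integrable (fun x => min (u x ^ 2) 1) := by
    refine iu2.mono' ((cu.pow 2).min continuous_const).aestronglyMeasurable ?_
    filter_upwards with x
    rw [Real.norm_eq_abs, abs_of_nonneg (le_min (sq_nonneg _) zero_le_one)]
    exact min_le_left _ _
  have hm0 : 0 ≤ ∫ x : ℝ, min (u x ^ 2) 1 :=
    integral_nonneg fun x => le_min (sq_nonneg _) zero_le_one
  have hmW : ∀ x, η * min (u x ^ 2) 1 ≤ W (u x) := by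
    intro x
    rcases le_or_gt (u x ^ 2) 1 with h | h
    · rw [min_eq_left h]
      refine hW1 _ ?_
      nlinarith [sq_abs (u x), abs_nonneg (u x)]
    · rw [min_eq_right h.le]
      rw [mul_one]
      refine hW2 _ ?_
      nlinarith [abs_nonneg (u x), sq_abs (u x)]
  have hm_le : ∫ x : ℝ, min (u x ^ 2) 1 ≤ A := by
    have h1 : η * ∫ x : ℝ, min (u x ^ 2) 1 ≤ ∫ x : ℝ, W (u x) := by
      rw [← integral_const_mul]
      exact integral_mono (im.const_mul _) hWint hmW
    rw [hA_def, le_div_iff₀ hη]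
    nlinarith
  -- Pb
  have Pb : ∀ t : ℝ, 0 < t → t*p ≤ A*(t + t^2*p + q) := by
    intro t ht
    have hptq0 : 0 ≤ t^2*p + q := by positivity
    have hpt : ∀ x, t * u x ^ 2 ≤ min (u x ^ 2) 1 * (t + (t^2*p + q)) := by
      intro x
      rcases le_or_gt (u x ^ 2) 1 with h | h
      · rw [min_eq_left h]
        nlinarith [sq_nonneg (u x)]
      · rw [min_eq_right h.le, one_mul]
        have := Sb t ht x
        linarith
    have h1 : t * p = ∫ x : ℝ, t * u x ^ 2 := by rw [hp_def]; exact (integral_const_mul t _).symm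
    have h2 : ∫ x : ℝ, t * u x ^ 2 ≤ ∫ x : ℝ, min (u x ^ 2) 1 * (t + (t^2*p + q)) :=
      integral_mono (iu2.const_mul _) (im.mul_const _) hpt
    have h3 : ∫ x : ℝ, min (u x ^ 2) 1 * (t + (t^2*p + q))
        = (∫ x : ℝ, min (u x ^ 2) 1) * (t + (t^2*p + q)) := integral_mul_const _ _
    have h4 : (∫ x : ℝ, min (u x ^ 2) 1) * (t + (t^2*p + q)) ≤ A * (t + (t^2*p + q)) :=
      mul_le_mul_of_nonneg_right hm_le (by linarith)
    calc t * p ≤ A * (t + (t^2*p + q)) := by linarith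
    _ = A*(t + t^2*p + q) := by ring
  -- conclude
  have hrM : r ≤ 2*M := by linarith
  have hpB : p ≤ B := by
    rw [hB_def]
    exact key_arith p q r A M hp0 hq0 hr0 hA hM hrM Pb Qb
  have hnorm : normSq u u'' v = V + r + p := by
    have ivu : Integrable (fun x => v x ^ 2 + u'' x ^ 2) := iv2.add iu''2
    rw [normSq, integral_add ivu iu2, integral_add iv2 iu''2, hV_def, hr_def, hp_def]
  have hle : normSq u u'' v ≤ 2*M + B := by
    rw [hnorm]; linarith
  calc Real.sqrt (normSq u u'' v) ≤ Real.sqrt (2*M + B) := Real.sqrt_le_sqrt hle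
  _ ≤ Real.sqrt (2*M + B) + 1 := by linarith
end
end

section
/- Let M, η > 0 and let u ∈ H²(ℝ). Set Ω⁺ = {x ∈ ℝ : u(x) > 1}. If ∫_ℝ (u_xx)² dx ≤ M and the Lebesgue measure of Ω⁺ satisfies |Ω⁺| ≤ M/η, then there exists a constant R depending only on M and η (not on u) such that ∫_{Ω⁺} u² dx ≤ R. -/
open MeasureTheory Filter Topology

noncomputable section

private lemma amgm1 (a b t : ℝ) (ha : 0 ≤ a) (ht : 0 < t) :
    2 * a * |b| ≤ a / t + t * (a * b ^ 2) := by
  rw [div_add' _ _ _ ht.ne', le_div_iff₀ ht]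
  rcases abs_cases b with ⟨hb, _⟩ | ⟨hb, _⟩ <;> rw [hb] <;>
    nlinarith [mul_nonneg ha (sq_nonneg (1 - t * b)), mul_nonneg ha (sq_nonneg (1 + t * b))]

private lemma amgm2 (a b s : ℝ) (ha : 0 ≤ a) (hs : 0 < s) :
    2 * a * |b| ≤ a ^ 2 / s + s * b ^ 2 := by
  rw [div_add' _ _ _ hs.ne', le_div_iff₀ hs]
  rcases abs_cases b with ⟨hb, _⟩ | ⟨hb, _⟩ <;> rw [hb] <;>
    nlinarith [sq_nonneg (a - s * b), sq_nonneg (a + s * b)]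

private lemma tendsto_zero_of_int {f : ℝ → ℝ} {l : ℝ}
    (hf : Integrable f) (h : Tendsto f atTop (𝓝 l)) : l = 0 := by
  by_contra hl
  have habs : Tendsto (fun x => |f x|) atTop (𝓝 |l|) := h.abs
  have h2 : ∀ᶠ x in atTop, |l| / 2 < |f x| :=
    habs.eventually (eventually_gt_nhds (half_lt_self (abs_pos.2 hl)))
  obtain ⟨A, hA⟩ := h2.exists_forall_of_atTop
  have hconst : Integrable (fun _ : ℝ => |l| / 2) (volume.restrict (Set.Ioi A)) := by
    refine Integrable.mono (hf.integrableOn (s := Set.Ioi A)) aestronglyMeasurable_const ?_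
    rw [ae_restrict_iff' measurableSet_Ioi]
    exact ae_of_all _ fun x hx => by
      rw [Real.norm_eq_abs, Real.norm_eq_abs, abs_of_nonneg (by positivity : (0:ℝ) ≤ |l| / 2)]
      exact (hA x hx.le).le
  rcases integrable_const_iff.mp hconst with hc | hc
  · exact hl (by simpa using abs_eq_zero.mp (by linarith [abs_nonneg l, div_eq_zero_iff.mp hc]))
  · replace hc := hc.measure_univ_lt_top; rw [Measure.restrict_apply_univ, Real.volume_Ioi] at hc
    exact (lt_irrefl _ hc).elim

private lemma tendsto_zero_of_int_bot {f : ℝ → ℝ} {l : ℝ}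
    (hf : Integrable f) (h : Tendsto f atBot (𝓝 l)) : l = 0 := by
  refine tendsto_zero_of_int (f := fun x => f (-x)) hf.comp_neg ?_
  exact h.comp tendsto_neg_atTop_atBot

private lemma hasDerivAt_posPart_sq (c : ℝ) :
    HasDerivAt (fun t : ℝ => max (t - 1) 0 ^ 2) (2 * max (c - 1) 0) c := by
  rcases lt_trichotomy c 1 with h | h | h
  · have heq : (fun t : ℝ => max (t - 1) 0 ^ 2) =ᶠ[𝓝 c] fun _ => (0:ℝ) := by
      filter_upwards [Iio_mem_nhds h] with t ht
      rw [max_eq_right (by simp only [Set.mem_Iio] at ht; linarith)]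
      norm_num
    rw [max_eq_right (by linarith)]
    simpa using (hasDerivAt_const c (0:ℝ)).congr_of_eventuallyEq heq
  · subst h
    rw [hasDerivAt_iff_tendsto]
    have hb : ∀ t : ℝ, ‖t - 1‖⁻¹ * ‖max (t - 1) 0 ^ 2 - max (1 - 1 : ℝ) 0 ^ 2
        - (t - 1) • (2 * max (1 - 1 : ℝ) 0)‖ ≤ |t - 1| := by
      intro t
      rcases eq_or_ne t 1 with rfl | ht
      · simp
      have hmax : max (t - 1) 0 ^ 2 ≤ (t - 1) ^ 2 := by
        rcases le_total (t - 1) 0 with h' | h'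
        · rw [max_eq_right h']; simpa using sq_nonneg (t - 1)
        · rw [max_eq_left h']
      have h1 : ‖max (t - 1) 0 ^ 2 - max (1 - 1 : ℝ) 0 ^ 2
          - (t - 1) • (2 * max (1 - 1 : ℝ) 0)‖ ≤ (t - 1) ^ 2 := by
        simp only [sub_self, max_self, smul_eq_mul, mul_zero, sub_zero, Real.norm_eq_abs]
        norm_num
        exact hmax
      calc ‖t - 1‖⁻¹ * ‖max (t - 1) 0 ^ 2 - max (1 - 1 : ℝ) 0 ^ 2
            - (t - 1) • (2 * max (1 - 1 : ℝ) 0)‖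
          ≤ |t - 1|⁻¹ * (t - 1) ^ 2 := by
            rw [Real.norm_eq_abs]
            exact mul_le_mul_of_nonneg_left h1 (by positivity)
        _ = |t - 1| := by
            rw [← sq_abs, sq, ← mul_assoc,
              inv_mul_cancel₀ (abs_ne_zero.2 (sub_ne_zero.2 ht)), one_mul]
    have htend : Tendsto (fun t : ℝ => |t - 1|) (𝓝 1) (𝓝 0) := by
      have : Continuous (fun t : ℝ => |t - 1|) := (continuous_id.sub continuous_const).abs
      simpa using this.tendsto 1
    simpa using squeeze_zero (fun t => by positivity) hb htend
  · have heq : (fun t : ℝ => max (t - 1) 0 ^ 2) =ᶠ[𝓝 c] fun t => (t - 1) ^ 2 := by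
      filter_upwards [Ioi_mem_nhds h] with t ht
      rw [max_eq_left (by simp only [Set.mem_Ioi] at ht; linarith)]
    have hd : HasDerivAt (fun t : ℝ => (t - 1) ^ 2) (2 * (c - 1)) c := by
      simpa [Pi.pow_def] using ((hasDerivAt_id c).sub_const 1).pow 2
    rw [max_eq_left (by linarith)]
    exact hd.congr_of_eventuallyEq heq

set_option maxHeartbeats 2000000 in
/-- The key estimate (lalla) in Lemma 4: let `M, η > 0` and `u ∈ H²(ℝ)`, and set
`Ω⁺ = {x | u x > 1}`.  If `∫ (u_xx)² ≤ M` and `|Ω⁺| ≤ M/η`, then there is a constant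
`R = R(M,η)`, independent of `u`, with `∫_{Ω⁺} u² ≤ R`. -/
theorem sq_integral_on_superlevel_bounded (M η : ℝ) (hM : 0 < M) (hη : 0 < η) :
    ∃ R : ℝ, ∀ u u' u'' : ℝ → ℝ,
      (∀ x, HasDerivAt u (u' x) x) → (∀ x, HasDerivAt u' (u'' x) x) →
      MemLp u 2 → MemLp u' 2 → MemLp u'' 2 →
      (∫ x : ℝ, (u'' x) ^ 2) ≤ M →
      volume {x : ℝ | 1 < u x} ≤ ENNReal.ofReal (M / η) →
      (∫ x in {x : ℝ | 1 < u x}, (u x) ^ 2) ≤ R := by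
  set L := M / η with hLdef
  have hL : 0 < L := div_pos hM hη
  set Sb : ℝ := 2 * (L * Real.sqrt L * Real.sqrt M) with hSbdef
  have hSb0 : 0 ≤ Sb := by positivity
  refine ⟨L * (1 + Sb) ^ 2, ?_⟩
  intro u u' u'' hu hu' hu2 hu'2 hu''2 hMint hvol
  have hu_cont : Continuous u := by
    have hd : Differentiable ℝ u := fun x => (hu x).differentiableAt
    exact hd.continuous
  have hu'_cont : Continuous u' := by
    have hd : Differentiable ℝ u' := fun x => (hu' x).differentiableAt
    exact hd.continuous
  set Ω : Set ℝ := {x : ℝ | 1 < u x} with hΩdef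
  have hΩopen : IsOpen Ω := isOpen_lt continuous_const hu_cont
  have hΩmeas : MeasurableSet Ω := hΩopen.measurableSet
  have hvolfin : volume Ω < ⊤ := lt_of_le_of_lt hvol ENNReal.ofReal_lt_top
  have hvolreal : (volume Ω).toReal ≤ L := by
    refine ENNReal.toReal_le_of_le_ofReal hL.le hvol
  set p : ℝ → ℝ := fun x => max (u x - 1) 0 with hpdef
  have hp_nonneg : ∀ x, 0 ≤ p x := fun x => le_max_right _ _
  have hp_cont : Continuous p := (hu_cont.sub continuous_const).max continuous_const
  have hp_zero : ∀ x, x ∉ Ω → p x = 0 := by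
    intro x hx
    simp only [hΩdef, Set.mem_setOf_eq, not_lt] at hx
    exact max_eq_right (by linarith)
  -- basic integrability
  have hIu2 : Integrable (fun x => u x ^ 2) := hu2.integrable_sq
  have hIu'2 : Integrable (fun x => u' x ^ 2) := hu'2.integrable_sq
  have hIu''2 : Integrable (fun x => u'' x ^ 2) := hu''2.integrable_sq
  have hp_le : ∀ x, p x ≤ |u x| := by
    intro x
    rcases le_total (u x - 1) 0 with h | h
    · rw [hpdef]; simp only [max_eq_right h]; positivity
    · rw [hpdef]; simp only [max_eq_left h]
      calc u x - 1 ≤ u x := by linarith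
        _ ≤ |u x| := le_abs_self _
  have hIp2 : Integrable (fun x => p x ^ 2) := by
    refine hIu2.mono' (hp_cont.pow 2).aestronglyMeasurable (ae_of_all _ fun x => ?_)
    rw [Real.norm_eq_abs, abs_of_nonneg (by positivity)]
    calc p x ^ 2 ≤ |u x| ^ 2 := by
          exact pow_le_pow_left₀ (hp_nonneg x) (hp_le x) 2
      _ = u x ^ 2 := sq_abs _
  have hIpu' : Integrable (fun x => p x * u' x) := by
    refine ((hIp2.add hIu'2).const_mul (1/2 : ℝ)).mono'
      (hp_cont.mul hu'_cont).aestronglyMeasurable (ae_of_all _ fun x => ?_)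
    rw [Real.norm_eq_abs, abs_mul, abs_of_nonneg (hp_nonneg x)]
    simp only [Pi.add_apply]
    nlinarith [sq_nonneg (p x - |u' x|), sq_abs (u' x), abs_nonneg (u' x), hp_nonneg x]
  set g : ℝ → ℝ := fun x => 2 * p x * u' x with hgdef
  have hIg : Integrable g := by
    have := hIpu'.const_mul 2
    refine this.congr (ae_of_all _ fun x => by rw [hgdef]; ring)
  -- derivative of p^2
  have hq : ∀ x, HasDerivAt (fun y => p y ^ 2) (g x) x := by
    intro x
    have := (hasDerivAt_posPart_sq (u x)).comp x (hu x)
    simpa [hpdef, hgdef, Function.comp_def, mul_assoc] using this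
  -- a point outside Ω
  obtain ⟨a, ha⟩ : ∃ a, a ∉ Ω := by
    by_contra hcon
    push_neg at hcon
    have : volume (Set.univ : Set ℝ) < ⊤ := by
      refine lt_of_le_of_lt (le_of_eq ?_) hvolfin
      congr 1
      exact (Set.eq_univ_of_forall hcon).symm
    simp at this
  have hpa : p a = 0 := hp_zero a ha
  -- FTC bound : p x ^ 2 ≤ ∫ |g|
  set C0 : ℝ := ∫ y, |g y| with hC0def
  have key1 : ∀ x, p x ^ 2 ≤ C0 := by
    intro x
    have hftc : ∫ y in a..x, g y = p x ^ 2 - p a ^ 2 :=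
      intervalIntegral.integral_eq_sub_of_hasDerivAt (fun y _ => hq y)
        (hIg.intervalIntegrable (a := a) (b := x))
    have hcase : ∀ c d : ℝ, c ≤ d → |∫ y in c..d, g y| ≤ C0 := by
      intro c d hcd
      calc |∫ y in c..d, g y| ≤ ∫ y in c..d, |g y| :=
            intervalIntegral.abs_integral_le_integral_abs hcd
        _ = ∫ y in Set.Ioc c d, |g y| := intervalIntegral.integral_of_le hcd
        _ ≤ C0 := setIntegral_le_integral hIg.abs (ae_of_all _ fun y => abs_nonneg _)
    have habs : |∫ y in a..x, g y| ≤ C0 := by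
      rcases le_total a x with hax | hax
      · exact hcase a x hax
      · rw [intervalIntegral.integral_symm, abs_neg]
        exact hcase x a hax
    rw [hftc, hpa] at habs
    simp only [ne_eq, OfNat.ofNat_ne_zero, not_false_eq_true, zero_pow, sub_zero] at habs
    exact (le_abs_self _).trans habs
  -- sup of p
  set S0 : ℝ := Real.sqrt C0 with hS0def
  have hS0nn : 0 ≤ S0 := Real.sqrt_nonneg _
  have hpS0 : ∀ x, p x ≤ S0 := by
    intro x
    have h1 : p x = Real.sqrt (p x ^ 2) := (Real.sqrt_sq (hp_nonneg x)).symm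
    rw [h1, hS0def]
    exact Real.sqrt_le_sqrt (key1 x)
  have hbdd : BddAbove (Set.range p) := ⟨S0, by rintro _ ⟨x, rfl⟩; exact hpS0 x⟩
  set S : ℝ := sSup (Set.range p) with hSdef
  have hS_ub : ∀ x, p x ≤ S := fun x => le_csSup hbdd ⟨x, rfl⟩
  have hSnn : 0 ≤ S := by
    have h1 := hS_ub a
    rw [hpa] at h1
    exact h1
  -- more integrability
  have hIpu'sq : Integrable (fun x => p x * u' x ^ 2) := by
    refine (hIu'2.const_mul S0).mono'
      (hp_cont.mul (hu'_cont.pow 2)).aestronglyMeasurable (ae_of_all _ fun x => ?_)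
    rw [Real.norm_eq_abs, abs_of_nonneg (mul_nonneg (hp_nonneg x) (sq_nonneg _))]
    exact mul_le_mul_of_nonneg_right (hpS0 x) (sq_nonneg _)
  have hu''_meas : AEStronglyMeasurable u'' volume := hu''2.aestronglyMeasurable
  have hIp2u'' : Integrable (fun x => p x ^ 2 * u'' x) := by
    refine ((hIp2.add hIu''2).const_mul (S0/2)).mono'
      (((hp_cont.pow 2).aestronglyMeasurable).mul hu''_meas) (ae_of_all _ fun x => ?_)
    rw [Real.norm_eq_abs, abs_mul, abs_of_nonneg (sq_nonneg (p x))]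
    simp only [Pi.add_apply]
    have h2 : p x * |u'' x| ≤ (p x ^ 2 + u'' x ^ 2) / 2 := by
      nlinarith [sq_nonneg (p x - |u'' x|), sq_abs (u'' x)]
    nlinarith [hpS0 x, hp_nonneg x, abs_nonneg (u'' x), hS0nn,
      mul_le_mul_of_nonneg_left h2 hS0nn,
      mul_le_mul_of_nonneg_right (hpS0 x) (mul_nonneg (hp_nonneg x) (abs_nonneg (u'' x)))]
  have hIH : Integrable (fun x => p x ^ 2 * u' x) := by
    refine ((hIp2.add hIu'2).const_mul (S0/2)).mono'
      ((hp_cont.pow 2).mul hu'_cont).aestronglyMeasurable (ae_of_all _ fun x => ?_)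
    rw [Real.norm_eq_abs, abs_mul, abs_of_nonneg (sq_nonneg (p x))]
    simp only [Pi.add_apply]
    have h2 : p x * |u' x| ≤ (p x ^ 2 + u' x ^ 2) / 2 := by
      nlinarith [sq_nonneg (p x - |u' x|), sq_abs (u' x)]
    nlinarith [mul_le_mul_of_nonneg_left h2 hS0nn,
      mul_le_mul_of_nonneg_right (hpS0 x) (mul_nonneg (hp_nonneg x) (abs_nonneg (u' x)))]
  have hIp4 : Integrable (fun x => p x ^ 4) := by
    refine (hIp2.const_mul (S0 ^ 2)).mono'
      ((hp_cont.pow 4).aestronglyMeasurable) (ae_of_all _ fun x => ?_)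
    rw [Real.norm_eq_abs, abs_of_nonneg (by positivity)]
    have h1 : p x ^ 2 ≤ S0 ^ 2 := pow_le_pow_left₀ (hp_nonneg x) (hpS0 x) 2
    nlinarith [sq_nonneg (p x)]
  have hIndS : ∀ c : ℝ, Integrable (Ω.indicator (fun _ => c)) := by
    intro c
    rw [integrable_indicator_iff hΩmeas]
    exact integrableOn_const hvolfin.ne
  have hIp : Integrable p := by
    refine (hIndS S0).mono' hp_cont.aestronglyMeasurable (ae_of_all _ fun x => ?_)
    rw [Real.norm_eq_abs, abs_of_nonneg (hp_nonneg x)]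
    by_cases hx : x ∈ Ω
    · rw [Set.indicator_of_mem hx]
      exact hpS0 x
    · rw [Set.indicator_of_notMem hx, hp_zero x hx]
  -- integral bounds
  have hintp : ∫ x, p x ≤ S * L := by
    have h1 : ∫ x, p x ≤ ∫ x, Ω.indicator (fun _ => S) x := by
      refine integral_mono hIp (hIndS S) fun x => ?_
      by_cases hx : x ∈ Ω
      · rw [Set.indicator_of_mem hx]; exact hS_ub x
      · rw [Set.indicator_of_notMem hx, hp_zero x hx]
    rw [integral_indicator hΩmeas, setIntegral_const, smul_eq_mul] at h1
    refine h1.trans ?_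
    calc (volume Ω).toReal * S ≤ L * S := mul_le_mul_of_nonneg_right hvolreal hSnn
      _ = S * L := mul_comm _ _
  have hintp2 : ∫ x, p x ^ 2 ≤ S ^ 2 * L := by
    have h1 : ∫ x, p x ^ 2 ≤ ∫ x, Ω.indicator (fun _ => S ^ 2) x := by
      refine integral_mono hIp2 (hIndS (S ^ 2)) fun x => ?_
      by_cases hx : x ∈ Ω
      · rw [Set.indicator_of_mem hx]
        exact pow_le_pow_left₀ (hp_nonneg x) (hS_ub x) 2
      · rw [Set.indicator_of_notMem hx, hp_zero x hx]
        norm_num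
    rw [integral_indicator hΩmeas, setIntegral_const, smul_eq_mul] at h1
    refine h1.trans ?_
    calc (volume Ω).toReal * S ^ 2 ≤ L * S ^ 2 :=
          mul_le_mul_of_nonneg_right hvolreal (sq_nonneg S)
      _ = S ^ 2 * L := mul_comm _ _
  have hintp4 : ∫ x, p x ^ 4 ≤ S ^ 2 * (S ^ 2 * L) := by
    have h1 : ∫ x, p x ^ 4 ≤ ∫ x, S ^ 2 * p x ^ 2 := by
      refine integral_mono hIp4 (hIp2.const_mul _) fun x => ?_
      have h2 : p x ^ 2 ≤ S ^ 2 := pow_le_pow_left₀ (hp_nonneg x) (hS_ub x) 2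
      nlinarith [sq_nonneg (p x)]
    rw [integral_const_mul] at h1
    refine h1.trans ?_
    exact mul_le_mul_of_nonneg_left hintp2 (sq_nonneg S)
  -- integration by parts
  set K : ℝ := ∫ x, p x * u' x ^ 2 with hKdef
  have hK0 : 0 ≤ K := integral_nonneg fun x => mul_nonneg (hp_nonneg x) (sq_nonneg _)
  set H : ℝ → ℝ := fun x => p x ^ 2 * u' x with hHdef
  set G : ℝ → ℝ := fun x => g x * u' x + p x ^ 2 * u'' x with hGdef
  have hHderiv : ∀ x, HasDerivAt H (G x) x := fun x => (hq x).mul (hu' x)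
  have hIG1 : Integrable (fun x => g x * u' x) := by
    refine (hIpu'sq.const_mul 2).congr (ae_of_all _ fun x => ?_)
    rw [hgdef]
    ring
  have hIG : Integrable G := hIG1.add hIp2u''
  have hftc0 : ∀ x, ∫ y in (0:ℝ)..x, G y = H x - H 0 := fun x =>
    intervalIntegral.integral_eq_sub_of_hasDerivAt (fun y _ => hHderiv y)
      (hIG.intervalIntegrable (a := (0:ℝ)) (b := x))
  have hTop : Tendsto H atTop (𝓝 (H 0 + ∫ y in Set.Ioi (0:ℝ), G y)) := by
    have h1 := intervalIntegral_tendsto_integral_Ioi 0 hIG.integrableOn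
      (tendsto_id (α := ℝ) (x := atTop))
    have h2 : Tendsto (fun x : ℝ => H 0 + ∫ y in (0:ℝ)..x, G y) atTop
        (𝓝 (H 0 + ∫ y in Set.Ioi (0:ℝ), G y)) := tendsto_const_nhds.add h1
    refine h2.congr fun x => by rw [hftc0 x]; ring
  have hBot : Tendsto H atBot (𝓝 (H 0 - ∫ y in Set.Iic (0:ℝ), G y)) := by
    have h1 := intervalIntegral_tendsto_integral_Iic 0 hIG.integrableOn
      (tendsto_id (α := ℝ) (x := atBot))
    have h2 : Tendsto (fun x : ℝ => H 0 - ∫ y in x..(0:ℝ), G y) atBot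
        (𝓝 (H 0 - ∫ y in Set.Iic (0:ℝ), G y)) := tendsto_const_nhds.sub h1
    refine h2.congr fun x => ?_
    rw [intervalIntegral.integral_symm, hftc0 x]
    ring
  have hl1 : H 0 + ∫ y in Set.Ioi (0:ℝ), G y = 0 := tendsto_zero_of_int hIH hTop
  have hl2 : H 0 - ∫ y in Set.Iic (0:ℝ), G y = 0 := tendsto_zero_of_int_bot hIH hBot
  have hGzero : ∫ y, G y = 0 := by
    rw [← intervalIntegral.integral_Iic_add_Ioi hIG.integrableOn hIG.integrableOn]
    linarith
  have hsplit : (2:ℝ) * K + ∫ y, p y ^ 2 * u'' y = 0 := by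
    rw [← hGzero, hGdef, integral_add hIG1 hIp2u'']
    congr 1
    rw [hKdef, ← integral_const_mul]
    refine integral_congr_ae (ae_of_all _ fun y => ?_)
    rw [hgdef]
    ring
  have h2K : 2 * K ≤ ∫ y, |p y ^ 2 * u'' y| := by
    have h1 : 2 * K = -∫ y, p y ^ 2 * u'' y := by linarith
    rw [h1]
    refine (neg_le_abs _).trans ?_
    calc |∫ y, p y ^ 2 * u'' y| = ‖∫ y, p y ^ 2 * u'' y‖ := (Real.norm_eq_abs _).symm
      _ ≤ ∫ y, ‖p y ^ 2 * u'' y‖ := norm_integral_le_integral_norm _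
      _ = ∫ y, |p y ^ 2 * u'' y| :=
          integral_congr_ae (ae_of_all _ fun y => Real.norm_eq_abs _)
  have hKs : ∀ s : ℝ, 0 < s → 4 * K ≤ S ^ 2 * (S ^ 2 * L) / s + s * M := by
    intro s hs
    have hpt : ∀ y, 2 * |p y ^ 2 * u'' y| ≤ p y ^ 4 / s + s * u'' y ^ 2 := by
      intro y
      have h1 := amgm2 (p y ^ 2) (u'' y) s (sq_nonneg _) hs
      rw [abs_mul, abs_of_nonneg (sq_nonneg (p y))]
      calc 2 * (p y ^ 2 * |u'' y|) = 2 * p y ^ 2 * |u'' y| := by ring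
        _ ≤ (p y ^ 2) ^ 2 / s + s * u'' y ^ 2 := h1
        _ = p y ^ 4 / s + s * u'' y ^ 2 := by ring_nf
    have hint : ∫ y, 2 * |p y ^ 2 * u'' y| ≤ ∫ y, (p y ^ 4 / s + s * u'' y ^ 2) := by
      refine integral_mono (hIp2u''.abs.const_mul 2)
        ((hIp4.div_const s).add (hIu''2.const_mul s)) hpt
    rw [integral_const_mul, integral_add (hIp4.div_const s) (hIu''2.const_mul s),
      integral_div, integral_const_mul] at hint
    have hd : (∫ y, p y ^ 4) / s ≤ S ^ 2 * (S ^ 2 * L) / s := by gcongr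
    have hm : s * ∫ y, u'' y ^ 2 ≤ s * M := by
      exact mul_le_mul_of_nonneg_left hMint hs.le
    linarith
  -- pointwise key bound with parameter t
  have key2 : ∀ t : ℝ, 0 < t → ∀ x, p x ^ 2 ≤ S * L / t + t * K := by
    intro t ht x
    refine (key1 x).trans ?_
    have hpt : ∀ y, |g y| ≤ p y / t + t * (p y * u' y ^ 2) := by
      intro y
      have h1 := amgm1 (p y) (u' y) t (hp_nonneg y) ht
      rw [hgdef]
      calc |2 * p y * u' y| = 2 * p y * |u' y| := by
            rw [abs_mul, abs_mul, abs_of_nonneg (hp_nonneg y)]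
            norm_num
        _ ≤ p y / t + t * (p y * u' y ^ 2) := h1
    have hint : C0 ≤ ∫ y, (p y / t + t * (p y * u' y ^ 2)) := by
      rw [hC0def]
      exact integral_mono hIg.abs ((hIp.div_const t).add (hIpu'sq.const_mul t)) hpt
    rw [integral_add (hIp.div_const t) (hIpu'sq.const_mul t), integral_div,
      integral_const_mul] at hint
    have hd : (∫ y, p y) / t ≤ S * L / t := by gcongr
    rw [← hKdef] at hint
    linarith
  -- choose parameters and bound S
  set aL : ℝ := Real.sqrt L with haLdef
  set bM : ℝ := Real.sqrt M with hbMdef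
  have haL : 0 < aL := Real.sqrt_pos.2 hL
  have hbM : 0 < bM := Real.sqrt_pos.2 hM
  have haL2 : aL ^ 2 = L := Real.sq_sqrt hL.le
  have hbM2 : bM ^ 2 = M := Real.sq_sqrt hM.le
  have hab : 0 < aL * bM := by positivity
  have hSle : S ≤ Sb := by
    rcases hSnn.eq_or_lt with hSz | hSpos
    · rw [← hSz]; exact hSb0
    · have hKb : K ≤ S ^ 2 * (aL * bM) / 2 := by
        have hs : 0 < S ^ 2 * aL / bM := by positivity
        have h1 := hKs _ hs
        have h2 : S ^ 2 * (S ^ 2 * L) / (S ^ 2 * aL / bM) + S ^ 2 * aL / bM * M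
            = 2 * (S ^ 2 * (aL * bM)) := by
          rw [← haL2, ← hbM2]
          field_simp
          ring
        linarith
      have ht : (0:ℝ) < 1 / (aL * bM) := by positivity
      have hB : ∀ x, p x ^ 2 ≤ S * L * (aL * bM) + S ^ 2 / 2 := by
        intro x
        have h1 := key2 _ ht x
        have h2 : S * L / (1 / (aL * bM)) = S * L * (aL * bM) := by
          field_simp
        have h3 : 1 / (aL * bM) * K ≤ S ^ 2 / 2 := by
          rw [one_div, inv_mul_eq_div, div_le_iff₀ hab]
          calc K ≤ S ^ 2 * (aL * bM) / 2 := hKb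
            _ = S ^ 2 / 2 * (aL * bM) := by ring
        rw [h2] at h1
        linarith
      have hBnn : 0 ≤ S * L * (aL * bM) + S ^ 2 / 2 :=
        add_nonneg (mul_nonneg (mul_nonneg hSnn hL.le) hab.le) (by positivity)
      have hS2 : S ^ 2 ≤ S * L * (aL * bM) + S ^ 2 / 2 := by
        have hub : ∀ x, p x ≤ Real.sqrt (S * L * (aL * bM) + S ^ 2 / 2) := by
          intro x
          rw [← Real.sqrt_sq (hp_nonneg x)]
          exact Real.sqrt_le_sqrt (hB x)
        have hSle' : S ≤ Real.sqrt (S * L * (aL * bM) + S ^ 2 / 2) :=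
          csSup_le (Set.range_nonempty p) (by rintro _ ⟨x, rfl⟩; exact hub x)
        calc S ^ 2 ≤ Real.sqrt (S * L * (aL * bM) + S ^ 2 / 2) ^ 2 :=
              pow_le_pow_left₀ hSnn hSle' 2
          _ = S * L * (aL * bM) + S ^ 2 / 2 := Real.sq_sqrt hBnn
      have hmul : S * S ≤ 2 * (L * aL * bM) * S := by nlinarith
      have hfin := le_of_mul_le_mul_right hmul hSpos
      calc S ≤ 2 * (L * aL * bM) := hfin
        _ = Sb := by rw [hSbdef]
  -- conclusion
  have hfin1 : ∫ x in Ω, u x ^ 2 ≤ ∫ x in Ω, (1 + Sb) ^ 2 := by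
    refine setIntegral_mono_on hIu2.integrableOn
      (integrableOn_const hvolfin.ne) hΩmeas fun x hx => ?_
    have hx1 : 1 < u x := by simpa [hΩdef] using hx
    have h2 : u x - 1 ≤ p x := le_max_left _ _
    have h3 : p x ≤ Sb := (hS_ub x).trans hSle
    have h0 : (0:ℝ) ≤ u x := by linarith
    exact pow_le_pow_left₀ h0 (by linarith) 2
  rw [setIntegral_const, smul_eq_mul] at hfin1
  refine hfin1.trans ?_
  exact mul_le_mul_of_nonneg_right hvolreal (sq_nonneg _)
end
end

section
/- Assume W : ℝ → ℝ is continuous, nonnegative, and satisfies (W-i): there exists η > 0 with W(s) ≥ η s² for |s| ≤ 1 and W(s) ≥ η for |s| ≥ 1. Let 𝐮_n = (u_n, v_n) be a sequence in X with E(𝐮_n) → 0. Then, up to a subsequence, ‖𝐮_n‖ → 0; i.e., u_n → 0 in H²(ℝ) and v_n → 0 in L²(ℝ). -/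
open MeasureTheory Filter Topology

noncomputable section

lemma integrable_mul_of_L2 {f g : ℝ → ℝ} (hf : MemLp f 2) (hg : MemLp g 2) :
    Integrable (fun x => f x * g x) := by
  have hmaj : Integrable (fun x => (1/2 : ℝ) * (f x ^ 2 + g x ^ 2)) :=
    (hf.integrable_sq.add hg.integrable_sq).const_mul _
  refine hmaj.mono' (hf.1.mul hg.1) (ae_of_all _ fun x => ?_)
  rw [Real.norm_eq_abs, abs_le]
  constructor <;> nlinarith [sq_nonneg (f x + g x), sq_nonneg (f x - g x)]

lemma cs_L2 {f g : ℝ → ℝ} (hf : MemLp f 2) (hg : MemLp g 2) :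
    ∫ x : ℝ, |f x * g x| ≤ Real.sqrt (∫ x : ℝ, f x ^ 2) * Real.sqrt (∫ x : ℝ, g x ^ 2) := by
  have hpq : (2 : ℝ).HolderConjugate 2 := ⟨by norm_num, by norm_num, by norm_num⟩
  have h2 : ENNReal.ofReal (2:ℝ) = 2 := by norm_num
  have hf' : MemLp f (ENNReal.ofReal (2:ℝ)) := by rw [h2]; exact hf
  have hg' : MemLp g (ENNReal.ofReal (2:ℝ)) := by rw [h2]; exact hg
  have := integral_mul_norm_le_Lp_mul_Lq hpq hf' hg'
  simp only [Real.norm_eq_abs, Real.rpow_two, sq_abs] at this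
  calc ∫ x : ℝ, |f x * g x| = ∫ x : ℝ, |f x| * |g x| := by simp [abs_mul]
    _ ≤ (∫ x : ℝ, f x ^ 2) ^ (1/(2:ℝ)) * (∫ x : ℝ, g x ^ 2) ^ (1/(2:ℝ)) := this
    _ = Real.sqrt (∫ x : ℝ, f x ^ 2) * Real.sqrt (∫ x : ℝ, g x ^ 2) := by
        rw [Real.sqrt_eq_rpow, Real.sqrt_eq_rpow]

lemma pt_bound {u u' : ℝ → ℝ} (hd : ∀ x, HasDerivAt u (u' x) x)
    (hu : MemLp u 2) (hu' : MemLp u' 2) (x : ℝ) :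
    u x ^ 2 ≤ 2 * (Real.sqrt (∫ t : ℝ, u t ^ 2) * Real.sqrt (∫ t : ℝ, u' t ^ 2)) := by
  have hg : ∀ y, HasDerivAt (fun t => u t ^ 2) (2 * u y * u' y) y := by
    intro y
    simpa using (hd y).fun_pow 2
  have hg'int : Integrable (fun t => 2 * u t * u' t) := by
    have := (integrable_mul_of_L2 hu hu').const_mul 2
    simpa [mul_assoc] using this
  have hgint : Integrable (fun t => u t ^ 2) := hu.integrable_sq
  have htb : Tendsto (fun t => u t ^ 2) atBot (𝓝 0) :=
    tendsto_zero_of_hasDerivAt_of_integrableOn_Iic (a := x) (fun y _ => hg y)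
      hg'int.integrableOn hgint.integrableOn
  have key : ∫ t in Set.Iic x, 2 * u t * u' t = u x ^ 2 - 0 :=
    integral_Iic_of_hasDerivAt_of_tendsto' (fun y _ => hg y) hg'int.integrableOn htb
  rw [sub_zero] at key
  have h1 : u x ^ 2 ≤ ∫ t in Set.Iic x, |2 * u t * u' t| := by
    rw [← key]
    calc ∫ t in Set.Iic x, 2 * u t * u' t ≤ |∫ t in Set.Iic x, 2 * u t * u' t| := le_abs_self _
      _ ≤ ∫ t in Set.Iic x, |2 * u t * u' t| := by
          simpa only [Real.norm_eq_abs] using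
            norm_integral_le_integral_norm (μ := volume.restrict (Set.Iic x))
              (fun t => 2 * u t * u' t)
  have h2 : ∫ t in Set.Iic x, |2 * u t * u' t| ≤ ∫ t : ℝ, |2 * u t * u' t| :=
    setIntegral_le_integral hg'int.abs (ae_of_all _ fun t => abs_nonneg _)
  have h3 : ∫ t : ℝ, |2 * u t * u' t| = 2 * ∫ t : ℝ, |u t * u' t| := by
    rw [← integral_const_mul]
    congr 1; funext t
    rw [mul_assoc, abs_mul]
    simp
  have h4 := cs_L2 hu hu'
  linarith [h1, h2]

lemma interp_bound {u u' u'' : ℝ → ℝ} (hd : ∀ x, HasDerivAt u (u' x) x)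
    (hd' : ∀ x, HasDerivAt u' (u'' x) x)
    (hu : MemLp u 2) (hu' : MemLp u' 2) (hu'' : MemLp u'' 2) :
    ∫ x : ℝ, u' x ^ 2 ≤ Real.sqrt (∫ x : ℝ, u x ^ 2) * Real.sqrt (∫ x : ℝ, u'' x ^ 2) := by
  have hmulint : Integrable (fun x => u x * u'' x) := integrable_mul_of_L2 hu hu''
  have hsum : Integrable (fun x => u' x ^ 2 + u x * u'' x) :=
    hu'.integrable_sq.add hmulint
  have hprod : Integrable (fun x => u x * u' x) := integrable_mul_of_L2 hu hu'
  have hderiv : ∀ x, HasDerivAt (fun t => u t * u' t) (u' x ^ 2 + u x * u'' x) x := by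
    intro x
    have := (hd x).fun_mul (hd' x)
    simpa [sq, mul_comm] using this
  have key : ∫ x : ℝ, (u' x ^ 2 + u x * u'' x) = 0 :=
    integral_eq_zero_of_hasDerivAt_of_integrable hderiv hsum hprod
  rw [integral_add hu'.integrable_sq hmulint] at key
  have h1 : ∫ x : ℝ, u' x ^ 2 = -∫ x : ℝ, u x * u'' x := by linarith
  have habs : |∫ x : ℝ, u x * u'' x| ≤ ∫ x : ℝ, |u x * u'' x| := by
    simpa only [Real.norm_eq_abs] using
      norm_integral_le_integral_norm (μ := (volume : Measure ℝ)) (fun x => u x * u'' x)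
  have h2 : -∫ x : ℝ, u x * u'' x ≤ ∫ x : ℝ, |u x * u'' x| :=
    le_trans (neg_le_abs _) habs
  rw [h1]
  exact h2.trans (cs_L2 hu hu'')


lemma num_bound {U D S w : ℝ} (hU : 0 ≤ U) (hD : 0 ≤ D) (hS : 0 ≤ S) (hw : 0 ≤ w)
    (h1 : D ≤ Real.sqrt U * Real.sqrt S)
    (h2 : U ≤ (1 + 2 * (Real.sqrt U * Real.sqrt D)) * w)
    (hS1 : S ≤ 1) (hw1 : w ≤ 1 / 9) : U ≤ 3 * w := by
  have hsU : Real.sqrt U ^ 2 = U := Real.sq_sqrt hU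
  have hsD : Real.sqrt D ^ 2 = D := Real.sq_sqrt hD
  have hnU : 0 ≤ Real.sqrt U := Real.sqrt_nonneg U
  have hnD : 0 ≤ Real.sqrt D := Real.sqrt_nonneg D
  have hnS : 0 ≤ Real.sqrt S := Real.sqrt_nonneg S
  have hS' : Real.sqrt S ≤ 1 := Real.sqrt_le_one.2 hS1
  rcases le_or_gt U 1 with hU1 | hU1
  · have h2U : Real.sqrt U ≤ 1 := Real.sqrt_le_one.2 hU1
    have hD1 : D ≤ 1 := by nlinarith
    have h2D : Real.sqrt D ≤ 1 := Real.sqrt_le_one.2 hD1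
    have hkey : Real.sqrt U * Real.sqrt D ≤ 1 := by nlinarith
    have : w * (Real.sqrt U * Real.sqrt D) ≤ w :=
      mul_le_of_le_one_right hw hkey
    nlinarith
  · have h1U : 1 ≤ Real.sqrt U := Real.one_le_sqrt.2 hU1.le
    have hDU : D ≤ Real.sqrt U := by nlinarith
    have h2D : Real.sqrt D ≤ Real.sqrt U := by
      calc Real.sqrt D ≤ Real.sqrt (Real.sqrt U ^ 2) := Real.sqrt_le_sqrt (by nlinarith)
        _ = Real.sqrt U := by rw [Real.sqrt_sq hnU]
    have h4 : Real.sqrt U * Real.sqrt D ≤ U := by nlinarith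
    have h5 : U ≤ (1 + 2 * U) * w := by nlinarith
    nlinarith


/-- Lemma 5: if `W ≥ 0` is continuous and satisfies (W-i), and `𝐮ₙ = (uₙ,vₙ)` is a
sequence of finite-energy states in `X` with `E(𝐮ₙ) → 0`, then up to a subsequence
`‖𝐮ₙ‖ → 0`. -/
theorem energy_to_zero_implies_norm_to_zero (W : ℝ → ℝ) (hWc : Continuous W)
    (hWpos : ∀ s, 0 ≤ W s)
    (hWi : ∃ η : ℝ, 0 < η ∧ (∀ s : ℝ, |s| ≤ 1 → η * s ^ 2 ≤ W s) ∧
      (∀ s : ℝ, 1 ≤ |s| → η ≤ W s))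
    (u u' u'' v : ℕ → ℝ → ℝ)
    (hX : ∀ n, InX (u n) (u' n) (u'' n) (v n))
    (hint : ∀ n, Integrable (fun x => W (u n x)))
    (hE : Filter.Tendsto (fun n => energy W (u n) (u'' n) (v n)) Filter.atTop (nhds 0)) :
    ∃ φ : ℕ → ℕ, StrictMono φ ∧
      Filter.Tendsto (fun k => Real.sqrt (normSq (u (φ k)) (u'' (φ k)) (v (φ k))))
        Filter.atTop (nhds 0) := by
  obtain ⟨η, hη, hWi1, hWi2⟩ := hWi
  -- basic integrability facts
  have hu2 : ∀ n, Integrable (fun x => u n x ^ 2) := fun n => (hX n).1.2.2.1.integrable_sq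
  have hu'2 : ∀ n, Integrable (fun x => u' n x ^ 2) := fun n => (hX n).1.2.2.2.1.integrable_sq
  have hu''2 : ∀ n, Integrable (fun x => u'' n x ^ 2) := fun n => (hX n).1.2.2.2.2.integrable_sq
  have hv2 : ∀ n, Integrable (fun x => v n x ^ 2) := fun n => (hX n).2.integrable_sq
  set A : ℕ → ℝ := fun n => ∫ x : ℝ, v n x ^ 2 with hA_def
  set B : ℕ → ℝ := fun n => ∫ x : ℝ, u'' n x ^ 2 with hB_def
  set C : ℕ → ℝ := fun n => ∫ x : ℝ, W (u n x) with hC_def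
  set Un : ℕ → ℝ := fun n => ∫ x : ℝ, u n x ^ 2 with hU_def
  set D : ℕ → ℝ := fun n => ∫ x : ℝ, u' n x ^ 2 with hD_def
  have hA0 : ∀ n, 0 ≤ A n := fun n => integral_nonneg fun x => sq_nonneg _
  have hB0 : ∀ n, 0 ≤ B n := fun n => integral_nonneg fun x => sq_nonneg _
  have hC0 : ∀ n, 0 ≤ C n := fun n => integral_nonneg fun x => hWpos _
  have hUn0 : ∀ n, 0 ≤ Un n := fun n => integral_nonneg fun x => sq_nonneg _
  have hD0 : ∀ n, 0 ≤ D n := fun n => integral_nonneg fun x => sq_nonneg _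
  have hEsplit : ∀ n, energy W (u n) (u'' n) (v n) = (1/2) * (A n + B n) + C n := by
    intro n
    unfold energy
    rw [integral_add (hv2 n) (hu''2 n)]
  -- C → 0 and A+B → 0
  have hCtend : Tendsto C atTop (𝓝 0) := by
    apply squeeze_zero' (Eventually.of_forall hC0)
      (Eventually.of_forall fun n => ?_) hE
    rw [hEsplit n]
    nlinarith [hA0 n, hB0 n]
  have hABtend : Tendsto (fun n => A n + B n) atTop (𝓝 0) := by
    have h2E : Tendsto (fun n => 2 * energy W (u n) (u'' n) (v n)) atTop (𝓝 0) := by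
      simpa using hE.const_mul 2
    apply squeeze_zero' (Eventually.of_forall fun n => add_nonneg (hA0 n) (hB0 n))
      (Eventually.of_forall fun n => ?_) h2E
    rw [hEsplit n]
    nlinarith [hC0 n]
  have hAtend : Tendsto A atTop (𝓝 0) :=
    squeeze_zero' (Eventually.of_forall hA0)
      (Eventually.of_forall fun n => by nlinarith [hB0 n]) hABtend
  have hBtend : Tendsto B atTop (𝓝 0) :=
    squeeze_zero' (Eventually.of_forall hB0)
      (Eventually.of_forall fun n => by nlinarith [hA0 n]) hABtend
  -- continuity of each u n
  have hucont : ∀ n, Continuous (u n) := fun n =>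
    continuous_iff_continuousAt.2 fun x => ((hX n).1.1 x).continuousAt
  -- the truncated mass
  set w : ℕ → ℝ := fun n => ∫ x : ℝ, min (u n x ^ 2) 1 with hw_def
  have hwint : ∀ n, Integrable (fun x => min (u n x ^ 2) 1) := by
    intro n
    refine (hu2 n).mono' ((((hucont n).pow 2).min continuous_const).aestronglyMeasurable)
      (ae_of_all _ fun x => ?_)
    rw [Real.norm_eq_abs, abs_of_nonneg (le_min (sq_nonneg _) zero_le_one)]
    exact min_le_left _ _
  have hw0 : ∀ n, 0 ≤ w n := fun n =>
    integral_nonneg fun x => le_min (sq_nonneg _) zero_le_one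
  have hηw : ∀ n, η * w n ≤ C n := by
    intro n
    rw [hw_def, ← integral_const_mul]
    refine integral_mono ((hwint n).const_mul η) (hint n) fun x => ?_
    rcases le_or_gt |u n x| 1 with h | h
    · have hsq : u n x ^ 2 ≤ 1 := by nlinarith [sq_abs (u n x), abs_nonneg (u n x)]
      rw [min_eq_left hsq]
      exact hWi1 _ h
    · have hsq : (1:ℝ) ≤ u n x ^ 2 := by nlinarith [sq_abs (u n x)]
      rw [min_eq_right hsq]
      simpa using hWi2 _ h.le
  -- w → 0
  have hwtend : Tendsto w atTop (𝓝 0) := by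
    have hCdiv : Tendsto (fun n => C n / η) atTop (𝓝 0) := by
      simpa using hCtend.div_const η
    exact squeeze_zero' (Eventually.of_forall hw0)
      (Eventually.of_forall fun n => (le_div_iff₀ hη).2 (by linarith [hηw n])) hCdiv
  -- the key integral bound : Un n ≤ (1 + M n) * w n
  have hUnw : ∀ n, Un n ≤ (1 + 2 * (Real.sqrt (Un n) * Real.sqrt (D n))) * w n := by
    intro n
    set M : ℝ := 2 * (Real.sqrt (Un n) * Real.sqrt (D n)) with hM_def
    have hM0 : 0 ≤ M := by positivity
    have hpt : ∀ x, u n x ^ 2 ≤ M := pt_bound (hX n).1.1 (hX n).1.2.2.1 (hX n).1.2.2.2.1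
    have hptwise : ∀ x, u n x ^ 2 ≤ (1 + M) * min (u n x ^ 2) 1 := by
      intro x
      rcases le_or_gt (u n x ^ 2) 1 with h | h
      · rw [min_eq_left h]; nlinarith [sq_nonneg (u n x)]
      · rw [min_eq_right h.le]; nlinarith [hpt x]
    calc Un n ≤ ∫ x : ℝ, (1 + M) * min (u n x ^ 2) 1 :=
          integral_mono (hu2 n) ((hwint n).const_mul _) hptwise
      _ = (1 + M) * w n := integral_const_mul _ _
  -- eventually S ≤ 1 and w ≤ 1/9, so Un ≤ 3 w
  have hBev : ∀ᶠ n in atTop, B n < 1 := hBtend.eventually (gt_mem_nhds one_pos)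
  have hwev : ∀ᶠ n in atTop, w n < 1/9 :=
    hwtend.eventually (gt_mem_nhds (by norm_num))
  have hUnev : ∀ᶠ n in atTop, Un n ≤ 3 * w n := by
    filter_upwards [hBev, hwev] with n hB1 hw1
    exact num_bound (hUn0 n) (hD0 n) (hB0 n) (hw0 n)
      (interp_bound (hX n).1.1 (hX n).1.2.1 (hX n).1.2.2.1 (hX n).1.2.2.2.1 (hX n).1.2.2.2.2)
      (hUnw n) hB1.le hw1.le
  have hUntend : Tendsto Un atTop (𝓝 0) := by
    have h3w : Tendsto (fun n => 3 * w n) atTop (𝓝 0) := by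
      simpa using hwtend.const_mul 3
    exact squeeze_zero' (Eventually.of_forall hUn0) hUnev h3w
  -- conclusion
  refine ⟨id, strictMono_id, ?_⟩
  have hns : Tendsto (fun n => normSq (u n) (u'' n) (v n)) atTop (𝓝 0) := by
    have hsplit : ∀ n, normSq (u n) (u'' n) (v n) = A n + B n + Un n := by
      intro n
      unfold normSq
      have h12 : Integrable (fun x : ℝ => v n x ^ 2 + u'' n x ^ 2) := (hv2 n).add (hu''2 n)
      rw [integral_add h12 (hu2 n), integral_add (hv2 n) (hu''2 n)]
    simp only [hsplit]
    simpa using (hAtend.add hBtend).add hUntend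
  have := (Real.continuous_sqrt.tendsto 0).comp hns
  simpa [Function.comp_def] using this
end
end
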